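/- Key separation lemma: Let G be a graph, H an induced connected subgraph of finite adhesion, K the dominated torso of H in G, and S a tendril in G with K-projection S′ = (w_m). If F ⊆ V(K) separates U ⊆ V(H) from W = {w_m : m ∈ ℕ} in K, then the S-modification F_S separates U from the vertex set of S in G. -/

import Mathlib

/-- A ray in `G`: a one-way infinite path. -/
def IsRay {V : Type*} (G : SimpleGraph V) (f : ℕ → V) : Prop :=
  Function.Injective f ∧ ∀ n, G.Adj (f n) (f (n + 1))

/-- `F` separates `U` from `S` in `G`: every path (walk) from a vertex of `U`
to a vertex of `S` meets `F`. -/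
def Separates {V : Type*} (G : SimpleGraph V) (F U S : Set V) : Prop :=
  ∀ u ∈ U, ∀ s ∈ S, ∀ p : G.Walk u s, ∃ x ∈ p.support, x ∈ F

/-- `U` is dispersed in `G`: every ray can be separated from `U` by a finite vertex set. -/
def Dispersed {V : Type*} (G : SimpleGraph V) (U : Set V) : Prop :=
  ∀ f : ℕ → V, IsRay G f → ∃ F : Set V, F.Finite ∧ Separates G F U (Set.range f)

/-- `v` is reachable from `u` by a walk avoiding `H` entirely. -/
def ReachOutside {V : Type*} (G : SimpleGraph V) (H : Set V) (u v : V) : Prop :=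
  ∃ p : G.Walk u v, ∀ x ∈ p.support, x ∉ H

/-- `D` is a connected component of `G − H` (the induced subgraph on `V(G) \ H`). -/
def IsComp {V : Type*} (G : SimpleGraph V) (H D : Set V) : Prop :=
  D.Nonempty ∧ ∀ u ∈ D, ∀ v : V, (v ∈ D ↔ v ∉ H ∧ ReachOutside G H u v)

/-- The neighborhood `N_G(D)`: vertices outside `D` adjacent in `G` to a vertex of `D`. -/
def nbhdOf {V : Type*} (G : SimpleGraph V) (D : Set V) : Set V :=
  {v | v ∉ D ∧ ∃ d ∈ D, G.Adj v d}

/-- `H` has finite adhesion in `G`: every component of `G − H` has finite neighborhood. -/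
def FiniteAdhesion {V : Type*} (G : SimpleGraph V) (H : Set V) : Prop :=
  ∀ D : Set V, IsComp G H D → (nbhdOf G D).Finite

/-- The component of `G − H` containing `u` (for `u ∉ H`). -/
def compOf {V : Type*} (G : SimpleGraph V) (H : Set V) (u : V) : Set V :=
  {v | v ∉ H ∧ ReachOutside G H u v}

/-- `𝒟′`: components of `G − H` whose adhesion set is shared by only finitely
many components. -/
def Dfin {V : Type*} (G : SimpleGraph V) (H : Set V) : Set (Set V) :=
  {D | IsComp G H D ∧ {D' | IsComp G H D' ∧ nbhdOf G D' = nbhdOf G D}.Finite}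

/-- `𝒟″`: components of `G − H` whose adhesion set is shared by infinitely
many components. -/
def Dinf {V : Type*} (G : SimpleGraph V) (H : Set V) : Set (Set V) :=
  {D | IsComp G H D ∧ ¬ {D' | IsComp G H D' ∧ nbhdOf G D' = nbhdOf G D}.Finite}

/-- `η` is an admissible contraction map: each `D ∈ 𝒟″` is contracted onto a vertex
`η D ∈ N_G(D)`, and for every `D ∈ 𝒟″` the map `η` restricted to the components
sharing the adhesion set `N_G(D)` surjects onto `N_G(D)`. -/
def EtaOK {V : Type*} (G : SimpleGraph V) (H : Set V) (η : Set V → V) : Prop :=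
  (∀ D ∈ Dinf G H, η D ∈ nbhdOf G D) ∧
  (∀ D ∈ Dinf G H, ∀ a ∈ nbhdOf G D,
    ∃ D' ∈ Dinf G H, nbhdOf G D' = nbhdOf G D ∧ η D' = a)

open Classical in
/-- The contraction map `ρ` onto the vertex set of the dominated torso:
vertices of `H` are kept, each `D ∈ 𝒟′` is contracted to the new vertex
`Sum.inr D`, and each `D ∈ 𝒟″` is contracted onto `η D ∈ N_G(D)`. -/
noncomputable def rho {V : Type*} (G : SimpleGraph V) (H : Set V) (η : Set V → V) :
    V → V ⊕ Set V := fun u =>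
  if u ∈ H then Sum.inl u
  else if compOf G H u ∈ Dfin G H then Sum.inr (compOf G H u)
  else Sum.inl (η (compOf G H u))

/-- The dominated torso `K` of `H` in `G`: the contraction minor of `G`
witnessed by `ρ`. -/
noncomputable def Torso {V : Type*} (G : SimpleGraph V) (H : Set V) (η : Set V → V) :
    SimpleGraph (V ⊕ Set V) where
  Adj a b := a ≠ b ∧ ∃ u v : V, rho G H η u = a ∧ rho G H η v = b ∧ G.Adj u v
  symm := by
    constructor
    rintro a b ⟨hne, u, v, hu, hv, huv⟩
    exact ⟨hne.symm, v, u, hv, hu, huv.symm⟩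
  loopless := by constructor; rintro a ⟨hne, -⟩; exact hne rfl

/-- The vertex set of the dominated torso. -/
def torsoVerts {V : Type*} (G : SimpleGraph V) (H : Set V) : Set (V ⊕ Set V) :=
  Sum.inl '' H ∪ Sum.inr '' Dfin G H

/-- A tendril in `G`: a ray with infinitely many vertices in `H`. -/
def IsTendril {V : Type*} (G : SimpleGraph V) (H : Set V) (f : ℕ → V) : Prop :=
  IsRay G f ∧ {n | f n ∈ H}.Infinite

open Classical in
/-- The `H`-masking of a sequence: vertices outside `H` are replaced by their
component of `G − H`. -/
noncomputable def mask {V : Type*} (G : SimpleGraph V) (H : Set V) : V → V ⊕ Set V :=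
  fun u => if u ∈ H then Sum.inl u else Sum.inr (compOf G H u)

/-- The indices of a ray kept by the `K`-projection: vertices of `H`, and the
first index of each maximal run of a component `D ∈ 𝒟′`. -/
def keepIdx {V : Type*} (G : SimpleGraph V) (H : Set V) (f : ℕ → V) (n : ℕ) : Prop :=
  f n ∈ H ∨
    (f n ∉ H ∧ compOf G H (f n) ∈ Dfin G H ∧
      (n = 0 ∨ mask G H (f (n - 1)) ≠ mask G H (f n)))

/-- The `K`-projection of a tendril: maximal runs of a component `D ∈ 𝒟′` are
replaced by the single vertex `v_D`, and terms in components of `𝒟″` are removed. -/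
noncomputable def rayProj {V : Type*} (G : SimpleGraph V) (H : Set V) (η : Set V → V)
    (f : ℕ → V) : ℕ → V ⊕ Set V :=
  fun m => rho G H η (f (Nat.nth (keepIdx G H f) m))

/-- `D̂′`: components of `𝒟′` whose contracted vertex lies in `F`. -/
def DhatFin {V : Type*} (G : SimpleGraph V) (H : Set V) (F : Set (V ⊕ Set V)) :
    Set (Set V) :=
  {D | D ∈ Dfin G H ∧ Sum.inr D ∈ F}

/-- `D̂″`: components `D ∈ 𝒟″` such that some term of the `H`-masking of the
tendril equals `D` and the next vertex of the tendril lies in `F`. -/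
def DhatInf {V : Type*} (G : SimpleGraph V) (H : Set V) (f : ℕ → V)
    (F : Set (V ⊕ Set V)) : Set (Set V) :=
  {D | D ∈ Dinf G H ∧ ∃ n : ℕ, f n ∉ H ∧ compOf G H (f n) = D ∧ Sum.inl (f (n + 1)) ∈ F}

/-- The `S`-modification `F_S` of a set `F ⊆ V(K)`. -/
def Smod {V : Type*} (G : SimpleGraph V) (H : Set V) (f : ℕ → V)
    (F : Set (V ⊕ Set V)) : Set V :=
  (Sum.inl ⁻¹' F ∩ H) ∪ ⋃ D ∈ DhatFin G H F ∪ DhatInf G H f F, nbhdOf G D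

section Aux
variable {V : Type*} {G : SimpleGraph V} {H : Set V} {η : Set V → V} {u v w x y : V} {D : Set V}

open SimpleGraph

lemma reach_symm (h : ReachOutside G H u v) : ReachOutside G H v u := by
  obtain ⟨p, hp⟩ := h
  exact ⟨p.reverse, by intro x hx; exact hp x (by simpa [Walk.support_reverse] using hx)⟩

lemma reach_trans (h1 : ReachOutside G H u v) (h2 : ReachOutside G H v w) :
    ReachOutside G H u w := by
  obtain ⟨p, hp⟩ := h1; obtain ⟨q, hq⟩ := h2
  refine ⟨p.append q, ?_⟩
  intro x hx
  rcases (Walk.mem_support_append_iff _ _).mp hx with h | h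
  · exact hp x h
  · exact hq x h

lemma mem_compOf_self (hu : u ∉ H) : u ∈ compOf G H u :=
  ⟨hu, Walk.nil, by simpa using hu⟩

lemma compOf_eq_of_mem (hv : v ∈ compOf G H u) : compOf G H v = compOf G H u := by
  ext w
  exact ⟨fun hw => ⟨hw.1, reach_trans hv.2 hw.2⟩,
         fun hw => ⟨hw.1, reach_trans (reach_symm hv.2) hw.2⟩⟩

lemma compOf_eq_of_adj (hu : u ∉ H) (hw : w ∉ H) (h : G.Adj u w) :
    compOf G H u = compOf G H w := by
  have : u ∈ compOf G H w := ⟨hu, Walk.cons h.symm Walk.nil, by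
    intro x hx; simp [Walk.support_cons] at hx; rcases hx with rfl | rfl <;> assumption⟩
  exact compOf_eq_of_mem this

lemma isComp_compOf (hu : u ∉ H) : IsComp G H (compOf G H u) := by
  refine ⟨⟨u, mem_compOf_self hu⟩, fun a ha v => ?_⟩
  rw [← compOf_eq_of_mem ha]; rfl

lemma IsComp.compOf_eq (hD : IsComp G H D) (hd : u ∈ D) : compOf G H u = D := by
  ext v; rw [hD.2 u hd v]; rfl

lemma IsComp.not_mem_H (hD : IsComp G H D) (hd : u ∈ D) : u ∉ H := by
  have := (hD.2 u hd u).mp hd; exact this.1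

lemma nbhd_subset_H (hD : IsComp G H D) : nbhdOf G D ⊆ H := by
  intro a ⟨haD, d, hd, had⟩
  by_contra haH
  have hdH : d ∉ H := hD.not_mem_H hd
  have : compOf G H a = compOf G H d := compOf_eq_of_adj haH hdH had
  exact haD (by rw [← hD.compOf_eq hd, ← this]; exact mem_compOf_self haH)

lemma dinf_not_dfin (h : D ∈ Dinf G H) : D ∉ Dfin G H := fun h' => h.2 h'.2

lemma dfin_or_dinf (hu : u ∉ H) : compOf G H u ∈ Dfin G H ∨ compOf G H u ∈ Dinf G H := by
  by_cases hfin : {D' | IsComp G H D' ∧ nbhdOf G D' = nbhdOf G (compOf G H u)}.Finite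
  · exact Or.inl ⟨isComp_compOf hu, hfin⟩
  · exact Or.inr ⟨isComp_compOf hu, hfin⟩

lemma rho_mem (hu : u ∈ H) : rho G H η u = Sum.inl u := by simp [rho, hu]

lemma rho_fin (hu : u ∉ H) (hD : compOf G H u ∈ Dfin G H) :
    rho G H η u = Sum.inr (compOf G H u) := by simp [rho, hu, hD]

lemma rho_inf (hu : u ∉ H) (hD : compOf G H u ∈ Dinf G H) :
    rho G H η u = Sum.inl (η (compOf G H u)) := by
  simp [rho, hu, dinf_not_dfin hD]

lemma torso_adj_nbhd (hη : EtaOK G H η) (hD : D ∈ Dinf G H) {a b : V}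
    (ha : a ∈ nbhdOf G D) (hb : b ∈ nbhdOf G D) (hab : a ≠ b) :
    (Torso G H η).Adj (Sum.inl a) (Sum.inl b) := by
  obtain ⟨D', hD', hnb, hηD'⟩ := hη.2 D hD b hb
  obtain ⟨-, d, hd, had⟩ : a ∈ nbhdOf G D' := hnb ▸ ha
  have hdH : d ∉ H := hD'.1.not_mem_H hd
  have hdc : compOf G H d = D' := hD'.1.compOf_eq hd
  have haH : a ∈ H := nbhd_subset_H hD.1 ha
  refine ⟨fun hc => hab (Sum.inl.inj hc), a, d, rho_mem haH, ?_, had⟩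
  rw [rho_inf hdH (hdc ▸ hD'), hdc, hηD']

lemma walk_meets_nbhd : ∀ {u s : V} (p : G.Walk u s), u ∉ D → ∀ v ∈ p.support, v ∈ D →
    ∃ a ∈ p.support, a ∈ nbhdOf G D := by
  intro u s p
  induction p with
  | nil =>
    intro hu v hv hvD
    simp only [Walk.support_nil, List.mem_singleton] at hv
    subst hv; exact absurd hvD hu
  | @cons u w s h p ih =>
    intro hu v hv hvD
    by_cases hw : w ∈ D
    · exact ⟨u, by simp, hu, w, hw, h⟩
    · rcases (by simpa using hv : v = u ∨ v ∈ p.support) with rfl | hv'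
      · exact absurd hvD hu
      · obtain ⟨a, ha, haN⟩ := ih hw v hv' hvD
        exact ⟨a, by simp [ha], haN⟩

lemma dfin_of_inr_mem {F : Set (V ⊕ Set V)} (hFK : F ⊆ torsoVerts G H)
    (h : Sum.inr D ∈ F) : D ∈ Dfin G H := by
  rcases hFK h with ⟨a, -, ha⟩ | ⟨D', hD', hD'e⟩
  · exact absurd ha (by simp)
  · rw [Sum.inr.injEq] at hD'e
    exact hD'e ▸ hD'

lemma mem_range_rayProj {f : ℕ → V} {k : ℕ} (hk : keepIdx G H f k) :
    rho G H η (f k) ∈ Set.range (rayProj G H η f) := by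
  classical
  exact ⟨Nat.count (keepIdx G H f) k, by rw [rayProj, Nat.nth_count hk]⟩

lemma projWalk (hη : EtaOK G H η) :
    ∀ {x y : V} (p : G.Walk x y), y ∈ H →
    ∃ (x' : V ⊕ Set V) (q : (Torso G H η).Walk x' (Sum.inl y)),
      ((x ∈ H ∧ x' = Sum.inl x) ∨
       (x ∉ H ∧ compOf G H x ∈ Dfin G H ∧ x' = Sum.inr (compOf G H x)) ∨
       (x ∉ H ∧ compOf G H x ∈ Dinf G H ∧
         ∃ a, a ∈ H ∧ a ∈ p.support ∧ a ∈ nbhdOf G (compOf G H x) ∧ x' = Sum.inl a)) ∧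
      ∀ z ∈ q.support,
        (∃ v ∈ p.support, v ∈ H ∧ z = Sum.inl v) ∨
        (∃ v ∈ p.support, v ∉ H ∧ z = Sum.inr (compOf G H v)) := by
  intro x y p
  induction p with
  | @nil y0 =>
    intro hy
    refine ⟨Sum.inl y0, Walk.nil, Or.inl ⟨hy, rfl⟩, ?_⟩
    intro z hz
    simp only [Walk.support_nil, List.mem_singleton] at hz
    exact Or.inl ⟨y0, by simp, hy, hz⟩
  | @cons x w y h p ih =>
    intro hy
    obtain ⟨x'', q, hstart, hhit⟩ := ih hy
    have hlift : ∀ z, ((∃ v ∈ p.support, v ∈ H ∧ z = Sum.inl v) ∨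
        (∃ v ∈ p.support, v ∉ H ∧ z = Sum.inr (compOf G H v))) →
        ((∃ v ∈ (Walk.cons h p).support, v ∈ H ∧ z = Sum.inl v) ∨
         (∃ v ∈ (Walk.cons h p).support, v ∉ H ∧ z = Sum.inr (compOf G H v))) := by
      rintro z (⟨v, hv, h1, h2⟩ | ⟨v, hv, h1, h2⟩)
      · exact Or.inl ⟨v, by simp [hv], h1, h2⟩
      · exact Or.inr ⟨v, by simp [hv], h1, h2⟩
    by_cases hx : x ∈ H
    · rcases hstart with ⟨hw, rfl⟩ | ⟨hw, hDf, rfl⟩ | ⟨hw, hDi, a, haH, hap, haN, rfl⟩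
      · -- w ∈ H
        have hadj : (Torso G H η).Adj (Sum.inl x) (Sum.inl w) :=
          ⟨by simpa using h.ne, x, w, rho_mem hx, rho_mem hw, h⟩
        refine ⟨Sum.inl x, Walk.cons hadj q, Or.inl ⟨hx, rfl⟩, ?_⟩
        intro z hz
        rcases (by simpa using hz : z = Sum.inl x ∨ z ∈ q.support) with rfl | hz'
        · exact Or.inl ⟨x, by simp, hx, rfl⟩
        · exact hlift z (hhit z hz')
      · -- w ∉ H, Dfin
        have hadj : (Torso G H η).Adj (Sum.inl x) (Sum.inr (compOf G H w)) :=
          ⟨by simp, x, w, rho_mem hx, rho_fin hw hDf, h⟩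
        refine ⟨Sum.inl x, Walk.cons hadj q, Or.inl ⟨hx, rfl⟩, ?_⟩
        intro z hz
        rcases (by simpa using hz : z = Sum.inl x ∨ z ∈ q.support) with rfl | hz'
        · exact Or.inl ⟨x, by simp, hx, rfl⟩
        · exact hlift z (hhit z hz')
      · -- w ∉ H, Dinf; x ∈ nbhd (compOf w)
        have hxN : x ∈ nbhdOf G (compOf G H w) :=
          ⟨fun hxD => hxD.1 hx, w, mem_compOf_self hw, h⟩
        by_cases hxa : x = a
        · subst hxa
          exact ⟨Sum.inl x, q, Or.inl ⟨hx, rfl⟩, fun z hz => hlift z (hhit z hz)⟩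
        · have hadj := torso_adj_nbhd hη hDi hxN haN hxa
          refine ⟨Sum.inl x, Walk.cons hadj q, Or.inl ⟨hx, rfl⟩, ?_⟩
          intro z hz
          rcases (by simpa using hz : z = Sum.inl x ∨ z ∈ q.support) with rfl | hz'
          · exact Or.inl ⟨x, by simp, hx, rfl⟩
          · exact hlift z (hhit z hz')
    · -- x ∉ H
      have hxD := mem_compOf_self (G := G) hx
      by_cases hw : w ∈ H
      · rcases hstart with ⟨-, rfl⟩ | ⟨hw', -⟩ | ⟨hw', -⟩
        rotate_left
        · exact absurd hw hw'
        · exact absurd hw hw'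
        rcases dfin_or_dinf (G := G) hx with hDf | hDi
        · have hadj : (Torso G H η).Adj (Sum.inr (compOf G H x)) (Sum.inl w) :=
            ⟨by simp, x, w, rho_fin hx hDf, rho_mem hw, h⟩
          refine ⟨Sum.inr (compOf G H x), Walk.cons hadj q,
            Or.inr (Or.inl ⟨hx, hDf, rfl⟩), ?_⟩
          intro z hz
          rcases (by simpa using hz : z = Sum.inr (compOf G H x) ∨ z ∈ q.support) with rfl | hz'
          · exact Or.inr ⟨x, by simp, hx, rfl⟩
          · exact hlift z (hhit z hz')
        · have hwN : w ∈ nbhdOf G (compOf G H x) := ⟨fun hc => hc.1 hw, x, hxD, h.symm⟩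
          exact ⟨Sum.inl w, q,
            Or.inr (Or.inr ⟨hx, hDi, w, hw, by simp, hwN, rfl⟩),
            fun z hz => hlift z (hhit z hz)⟩
      · -- w ∉ H: same component
        have hcomp : compOf G H x = compOf G H w := compOf_eq_of_adj hx hw h
        rcases hstart with ⟨hwH, -⟩ | ⟨-, hDf, rfl⟩ | ⟨-, hDi, a, haH, hap, haN, rfl⟩
        · exact absurd hwH hw
        · exact ⟨Sum.inr (compOf G H w), q,
            Or.inr (Or.inl ⟨hx, hcomp ▸ hDf, by rw [hcomp]⟩),
            fun z hz => hlift z (hhit z hz)⟩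
        · exact ⟨Sum.inl a, q,
            Or.inr (Or.inr ⟨hx, hcomp ▸ hDi, a, haH, by simp [hap], hcomp ▸ haN, rfl⟩),
            fun z hz => hlift z (hhit z hz)⟩

end Aux

/-- Key separation lemma: if `F ⊆ V(K)` separates `U ⊆ V(H)` from the vertex set
of the `K`-projection `S′` of a tendril `S` in the dominated torso `K`, then the
`S`-modification `F_S` separates `U` from the vertex set of `S` in `G`. -/
theorem smod_separates {V : Type*} (G : SimpleGraph V) (H : Set V) (η : Set V → V)
    (hHconn : (G.induce H).Connected)
    (hadh : FiniteAdhesion G H) (hη : EtaOK G H η)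
    (f : ℕ → V) (hf : IsTendril G H f)
    (U : Set V) (hUH : U ⊆ H)
    (F : Set (V ⊕ Set V)) (hFK : F ⊆ torsoVerts G H)
    (hsep : Separates (Torso G H η) F (Sum.inl '' U) (Set.range (rayProj G H η f))) :
    Separates G (Smod G H f F) U (Set.range f) := by
  classical
  intro u hu s hs p
  obtain ⟨n, rfl⟩ := hs
  obtain ⟨x', q, hstart, hhit⟩ := projWalk hη p.reverse (hUH hu)
  have hconv : ∀ z ∈ q.support, z ∈ F → ∃ x ∈ p.support, x ∈ Smod G H f F := by
    intro z hz hzF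
    rcases hhit z hz with ⟨v, hv, hvH, rfl⟩ | ⟨v, hv, hvH, rfl⟩
    · exact ⟨v, by simpa [SimpleGraph.Walk.support_reverse] using hv, Or.inl ⟨hzF, hvH⟩⟩
    · have hDf : compOf G H v ∈ Dfin G H := dfin_of_inr_mem hFK hzF
      have hv' : v ∈ p.support := by simpa [SimpleGraph.Walk.support_reverse] using hv
      have huD : u ∉ compOf G H v := fun hc => hc.1 (hUH hu)
      obtain ⟨a, ha, haN⟩ := walk_meets_nbhd p huD v hv' (mem_compOf_self hvH)
      exact ⟨a, ha, Or.inr (Set.mem_biUnion (Set.mem_union_left _ ⟨hDf, hzF⟩) haN)⟩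
  rcases hstart with ⟨hnH, rfl⟩ | ⟨hnH, hDf, rfl⟩ | ⟨hnH, hDi, a, haH, hap, haN, rfl⟩
  · -- f n ∈ H
    have hmem : Sum.inl (f n) ∈ Set.range (rayProj G H η f) := by
      have := mem_range_rayProj (η := η) (Or.inl hnH : keepIdx G H f n)
      rwa [rho_mem hnH] at this
    obtain ⟨z, hz, hzF⟩ := hsep (Sum.inl u) ⟨u, hu, rfl⟩ _ hmem q.reverse
    exact hconv z (by simpa [SimpleGraph.Walk.support_reverse] using hz) hzF
  · -- f n in a Dfin component
    have hP : ∃ k, ∀ i, k ≤ i → i ≤ n → mask G H (f i) = mask G H (f n) :=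
      ⟨n, fun i h1 h2 => by rw [le_antisymm h2 h1]⟩
    set n₀ := Nat.find hP with hn₀def
    have hspec := Nat.find_spec hP
    have hn₀n : n₀ ≤ n := Nat.find_min' hP (fun i h1 h2 => by rw [le_antisymm h2 h1])
    have hmask : mask G H (f n₀) = mask G H (f n) := hspec n₀ le_rfl hn₀n
    have hmn : mask G H (f n) = Sum.inr (compOf G H (f n)) := by simp [mask, hnH]
    have hn₀H : f n₀ ∉ H := by
      intro hmem
      rw [hmn] at hmask
      simp [mask, hmem] at hmask
    have hcomp : compOf G H (f n₀) = compOf G H (f n) := by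
      rw [hmn] at hmask
      simpa [mask, hn₀H] using hmask
    have hk : keepIdx G H f n₀ := by
      refine Or.inr ⟨hn₀H, hcomp ▸ hDf, ?_⟩
      by_cases h0 : n₀ = 0
      · exact Or.inl h0
      · refine Or.inr fun heq => ?_
        have : ∀ i, n₀ - 1 ≤ i → i ≤ n → mask G H (f i) = mask G H (f n) := by
          intro i h1 h2
          rcases Nat.lt_or_ge i n₀ with hlt | hge
          · have : i = n₀ - 1 := by omega
            rw [this, heq, hmask]
          · exact hspec i hge h2
        exact Nat.find_min hP (by omega) this
    have hmem : Sum.inr (compOf G H (f n)) ∈ Set.range (rayProj G H η f) := by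
      have := mem_range_rayProj (η := η) hk
      rwa [rho_fin hn₀H (hcomp ▸ hDf), hcomp] at this
    obtain ⟨z, hz, hzF⟩ := hsep (Sum.inl u) ⟨u, hu, rfl⟩ _ hmem q.reverse
    exact hconv z (by simpa [SimpleGraph.Walk.support_reverse] using hz) hzF
  · -- f n in a Dinf component
    have hex : ∃ k, n ≤ k ∧ f (k + 1) ∈ H := by
      obtain ⟨m, hmH, hmn⟩ := hf.2.exists_gt n
      exact ⟨m - 1, by omega, by rw [Nat.sub_add_cancel (by omega)]; exact hmH⟩
    set j := Nat.find hex with hjdef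
    obtain ⟨hjn, hjH⟩ := Nat.find_spec hex
    have hrun : ∀ d, n + d ≤ j → f (n + d) ∉ H ∧ compOf G H (f (n + d)) = compOf G H (f n) := by
      intro d
      induction d with
      | zero => intro _; exact ⟨hnH, rfl⟩
      | succ d ihd =>
        intro hle
        have hd' := ihd (by omega)
        have hnext : f (n + d + 1) ∉ H := by
          intro hmem
          have : j ≤ n + d := Nat.find_min' hex ⟨by omega, hmem⟩
          omega
        have hadj := hf.1.2 (n + d)
        refine ⟨by rw [show n + (d + 1) = n + d + 1 by omega]; exact hnext, ?_⟩
        rw [show n + (d + 1) = n + d + 1 by omega,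
          ← compOf_eq_of_adj hd'.1 hnext hadj, hd'.2]
    have hjrun := hrun (j - n) (by omega)
    rw [show n + (j - n) = j by omega] at hjrun
    obtain ⟨hjH', hjD⟩ := hjrun
    have hbN : f (j + 1) ∈ nbhdOf G (compOf G H (f n)) :=
      ⟨fun hc => hc.1 hjH, f j, hjD ▸ mem_compOf_self hjH', (hf.1.2 j).symm⟩
    have hmem : Sum.inl (f (j + 1)) ∈ Set.range (rayProj G H η f) := by
      have := mem_range_rayProj (η := η) (Or.inl hjH : keepIdx G H f (j + 1))
      rwa [rho_mem hjH] at this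
    by_cases hab : a = f (j + 1)
    · obtain ⟨z, hz, hzF⟩ := hsep (Sum.inl u) ⟨u, hu, rfl⟩ _ (hab ▸ hmem) q.reverse
      exact hconv z (by simpa [SimpleGraph.Walk.support_reverse] using hz) hzF
    · have hadj := torso_adj_nbhd hη hDi haN hbN hab
      obtain ⟨z, hz, hzF⟩ := hsep (Sum.inl u) ⟨u, hu, rfl⟩ _ hmem (q.reverse.concat hadj)
      rw [SimpleGraph.Walk.support_concat] at hz
      simp only [List.concat_eq_append, List.mem_append, List.mem_singleton] at hz
      rcases hz with hz' | rfl
      · exact hconv z (by simpa [SimpleGraph.Walk.support_reverse] using hz') hzF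
      · have hDhat : compOf G H (f n) ∈ DhatInf G H f F := ⟨hDi, j, hjH', hjD, hzF⟩
        exact ⟨a, by simpa [SimpleGraph.Walk.support_reverse] using hap,
          Or.inr (Set.mem_biUnion (Set.mem_union_right _ hDhat) haN)⟩
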